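/- For every weighted graph G on a finite vertex set V of N vertices (given by a symmetric weight function into [0,1]) there exists an unweighted graph G' on the same vertex set (a symmetric function into {0,1}) such that for every positive integer k and every partition P of V into at most k nonempty parts, |irreg_{G'}(P) − irreg_G(P)| ≤ 8k²N^{3/2}. -/

import Mathlib

open Finset

/-- The sum of weights over ordered pairs in `A × B` in a weighted graph `w`. -/
def weightSum {V : Type*} (w : V → V → ℝ) (A B : Finset V) : ℝ :=
  ∑ x ∈ A, ∑ y ∈ B, w x y

/-- The weighted edge density between `X` and `Y`. -/
noncomputable def wDensity {V : Type*} (w : V → V → ℝ) (X Y : Finset V) : ℝ :=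
  weightSum w X Y / ((X.card : ℝ) * (Y.card : ℝ))

/-- The irregularity of the pair `X, Y` in a weighted graph `w`. -/
noncomputable def wIrregPair {V : Type*} [DecidableEq V] (w : V → V → ℝ)
    (X Y : Finset V) : ℝ :=
  (X.powerset ×ˢ Y.powerset).sup'
    ⟨(∅, ∅), by simp⟩
    (fun UW => |weightSum w UW.1 UW.2 - (UW.1.card : ℝ) * (UW.2.card : ℝ) * wDensity w X Y|)

/-- The irregularity of a vertex partition in a weighted graph `w`. -/
noncomputable def wIrregPartition {V : Type*} [DecidableEq V] (w : V → V → ℝ)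
    (P : Finset (Finset V)) : ℝ :=
  ∑ X ∈ P, ∑ Y ∈ P, wIrregPair w X Y

/-- `P` is a partition of the vertex set into nonempty parts. -/
def IsPartition {V : Type*} [Fintype V] [DecidableEq V] (P : Finset (Finset V)) : Prop :=
  (∀ p ∈ P, p.Nonempty) ∧ (∀ p ∈ P, ∀ q ∈ P, p ≠ q → Disjoint p q) ∧
    P.biUnion id = Finset.univ

lemma sup'_le_sup'_add {α : Type*} {s : Finset α} (H : s.Nonempty) (f h : α → ℝ) (c : ℝ)
    (hfh : ∀ i ∈ s, f i ≤ h i + c) : s.sup' H f ≤ s.sup' H h + c :=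
  Finset.sup'_le _ _ fun i hi => le_trans (hfh i hi)
    (add_le_add_left (Finset.le_sup' h hi) c)

lemma pair_diff {V : Type*} [DecidableEq V] (g w : V → V → ℝ) (X Y : Finset V)
    (hX : X.Nonempty) (hY : Y.Nonempty) (t : ℝ)
    (hbox : ∀ U W : Finset V, |weightSum g U W - weightSum w U W| ≤ t) :
    |wIrregPair g X Y - wIrregPair w X Y| ≤ 2 * t := by
  have key : ∀ (g w : V → V → ℝ),
      (∀ U W : Finset V, |weightSum g U W - weightSum w U W| ≤ t) →
      wIrregPair g X Y ≤ wIrregPair w X Y + 2 * t := by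
    intro g w hbox
    refine sup'_le_sup'_add _ _ _ _ ?_
    rintro ⟨U, W⟩ hUW
    simp only [Finset.mem_product, Finset.mem_powerset] at hUW
    obtain ⟨hU, hW⟩ := hUW
    simp only
    have hXc : (0:ℝ) < X.card := by exact_mod_cast Finset.card_pos.2 hX
    have hYc : (0:ℝ) < Y.card := by exact_mod_cast Finset.card_pos.2 hY
    have hUc : (U.card : ℝ) ≤ X.card := by exact_mod_cast Finset.card_le_card hU
    have hWc : (W.card : ℝ) ≤ Y.card := by exact_mod_cast Finset.card_le_card hW
    have hU0 : (0:ℝ) ≤ U.card := by positivity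
    have hW0 : (0:ℝ) ≤ W.card := by positivity
    have hd : wDensity g X Y - wDensity w X Y =
        (weightSum g X Y - weightSum w X Y) / ((X.card : ℝ) * Y.card) := by
      rw [wDensity, wDensity, div_sub_div_same]
    have h2 : (U.card : ℝ) * W.card * |wDensity g X Y - wDensity w X Y| ≤ t := by
      rw [hd, abs_div, abs_of_pos (by positivity : (0:ℝ) < (X.card:ℝ) * Y.card)]
      calc (U.card : ℝ) * W.card * (|weightSum g X Y - weightSum w X Y|
              / ((X.card:ℝ) * Y.card)) ≤ (X.card : ℝ) * Y.card *
              (|weightSum g X Y - weightSum w X Y| / ((X.card:ℝ) * Y.card)) := by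
              apply mul_le_mul_of_nonneg_right (by nlinarith) (by positivity)
          _ = |weightSum g X Y - weightSum w X Y| := by field_simp
          _ ≤ t := hbox X Y
    have h1 := hbox U W
    set Ag := weightSum g U W - (U.card : ℝ) * W.card * wDensity g X Y with hAg
    set Aw := weightSum w U W - (U.card : ℝ) * W.card * wDensity w X Y with hAw
    have : |Ag - Aw| ≤ 2 * t := by
      have : Ag - Aw = (weightSum g U W - weightSum w U W)
          - (U.card : ℝ) * W.card * (wDensity g X Y - wDensity w X Y) := by
        rw [hAg, hAw]; ring
      rw [this]
      calc |(weightSum g U W - weightSum w U W)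
          - (U.card : ℝ) * W.card * (wDensity g X Y - wDensity w X Y)|
          ≤ |weightSum g U W - weightSum w U W|
            + |(U.card : ℝ) * W.card * (wDensity g X Y - wDensity w X Y)| := abs_sub _ _
        _ ≤ t + t := by
            refine add_le_add h1 ?_
            rw [abs_mul, abs_of_nonneg (by positivity : (0:ℝ) ≤ (U.card:ℝ) * W.card)]
            exact h2
        _ = 2 * t := by ring
    calc |Ag| ≤ |Aw| + |Ag - Aw| := by
          have := abs_sub_abs_le_abs_sub Ag Aw
          linarith [abs_nonneg (Ag - Aw)]
      _ ≤ |Aw| + 2 * t := by linarith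
  have hbox' : ∀ U W : Finset V, |weightSum w U W - weightSum g U W| ≤ t := by
    intro U W; rw [abs_sub_comm]; exact hbox U W
  have a := key g w hbox
  have b := key w g hbox'
  rw [abs_sub_le_iff]
  constructor <;> linarith


section Core
variable {V : Type*} [Fintype V] [DecidableEq V]

noncomputable def wbF (w : V → V → ℝ) (hsymm : ∀ x y, w x y = w y x) : Sym2 V → ℝ :=
  Sym2.lift ⟨w, hsymm⟩

noncomputable def muF (w : V → V → ℝ) (hsymm : ∀ x y, w x y = w y x)
    (ω : Sym2 V → Bool) : ℝ :=
  ∏ p : Sym2 V, (if ω p then wbF w hsymm p else 1 - wbF w hsymm p)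

variable (w : V → V → ℝ) (hsymm : ∀ x y, w x y = w y x)

lemma wbF_mk (x y : V) : wbF w hsymm s(x, y) = w x y := by
  simp [wbF]

lemma muF_nonneg (h0 : ∀ x y, 0 ≤ w x y) (h1 : ∀ x y, w x y ≤ 1) (ω : Sym2 V → Bool) :
    0 ≤ muF w hsymm ω := by
  refine Finset.prod_nonneg fun p _ => ?_
  induction p using Sym2.ind with
  | _ x y => rw [wbF_mk]; split <;> [exact h0 x y; linarith [h1 x y]]

/-- expectation of a product over independent coordinates. -/
lemma expect_prod (f : Sym2 V → Bool → ℝ) :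
    ∑ ω : Sym2 V → Bool, muF w hsymm ω * ∏ p : Sym2 V, f p (ω p)
      = ∏ p : Sym2 V, (wbF w hsymm p * f p true + (1 - wbF w hsymm p) * f p false) := by
  have step : ∀ ω : Sym2 V → Bool, muF w hsymm ω * ∏ p : Sym2 V, f p (ω p)
      = ∏ p : Sym2 V, ((if ω p then wbF w hsymm p else 1 - wbF w hsymm p) * f p (ω p)) := by
    intro ω; rw [muF, ← Finset.prod_mul_distrib]
  simp_rw [step]
  rw [← Fintype.piFinset_univ]
  rw [(Finset.prod_univ_sum (fun _ : Sym2 V => (Finset.univ : Finset Bool))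
    (fun p b => (if b then wbF w hsymm p else 1 - wbF w hsymm p) * f p b)).symm]
  refine Finset.prod_congr rfl fun p _ => ?_
  simp [Fintype.sum_bool]
lemma expect_total :
    ∑ ω : Sym2 V → Bool, muF w hsymm ω = 1 := by
  have := expect_prod w hsymm (fun _ _ => 1)
  simpa using this
end Core

section Core2
variable {V : Type*} [Fintype V] [DecidableEq V]

noncomputable def chi : Bool → ℝ := fun b => if b then 1 else 0

/-- fiber counts -/
def fibc (U W : Finset V) (p : Sym2 V) : ℕ :=
  ((U ×ˢ W).filter fun q => Sym2.mk.uncurry q = p).card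

lemma fibc_le_two (U W : Finset V) (p : Sym2 V) : fibc U W p ≤ 2 := by
  induction p using Sym2.ind with
  | _ x y =>
    have hsub : ((U ×ˢ W).filter fun q => Sym2.mk.uncurry q = s(x, y))
        ⊆ {(x, y), (y, x)} := by
      rintro ⟨a, b⟩ hq
      rw [Finset.mem_filter] at hq
      have : s(a, b) = s(x, y) := hq.2
      rw [Sym2.eq_iff] at this
      simp only [Finset.mem_insert, Finset.mem_singleton, Prod.mk.injEq]
      tauto
    calc fibc U W s(x,y) ≤ ({(x, y), (y, x)} : Finset (V × V)).card :=
          Finset.card_le_card hsub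
      _ ≤ 2 := Finset.card_insert_le _ _ |>.trans (by simp)

lemma fibc_sum (U W : Finset V) : ∑ p : Sym2 V, fibc U W p = U.card * W.card := by
  rw [← Finset.card_product]
  exact (Finset.card_eq_sum_card_fiberwise fun q _ => Finset.mem_univ (Sym2.mk.uncurry q)).symm

lemma S_repr (w : V → V → ℝ) (hsymm : ∀ x y, w x y = w y x) (ω : Sym2 V → Bool)
    (U W : Finset V) :
    weightSum (fun x y => chi (ω s(x, y))) U W - weightSum w U W
      = ∑ p : Sym2 V, (fibc U W p : ℝ) * (chi (ω p) - wbF w hsymm p) := by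
  have h1 : weightSum (fun x y => chi (ω s(x, y))) U W - weightSum w U W
      = ∑ q ∈ U ×ˢ W, (chi (ω (Sym2.mk.uncurry q)) - wbF w hsymm (Sym2.mk.uncurry q)) := by
    rw [Finset.sum_product]
    rw [weightSum, weightSum, ← Finset.sum_sub_distrib]
    refine Finset.sum_congr rfl fun x _ => ?_
    rw [← Finset.sum_sub_distrib]
    refine Finset.sum_congr rfl fun y _ => ?_
    rw [Function.uncurry_apply_pair, wbF_mk]
  rw [h1, ← Finset.sum_fiberwise' (U ×ˢ W) Sym2.mk.uncurry
    (fun p => chi (ω p) - wbF w hsymm p)]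
  refine Finset.sum_congr rfl fun p _ => ?_
  rw [Finset.sum_const, nsmul_eq_mul]
  rfl

end Core2

section Core3
variable {V : Type*} [Fintype V] [DecidableEq V]

lemma exp_quad_bound' {x : ℝ} (hx : |x| ≤ 1) : Real.exp x ≤ 1 + x + 3 / 4 * x ^ 2 := by
  have h := Real.exp_bound hx (n := 2) (by norm_num)
  have h2 : |Real.exp x - (1 + x)| ≤ |x| ^ 2 * (3 / 4) := by
    norm_num [Finset.sum_range_succ] at h
    convert h using 2 <;> norm_num
  have hx2 : |x| ^ 2 = x ^ 2 := sq_abs x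
  have := (abs_le.1 h2).2
  nlinarith

lemma coord_mgf {q a : ℝ} (hq0 : 0 ≤ q) (hq1 : q ≤ 1) (ha : |a| ≤ 1) :
    q * Real.exp (a * (1 - q)) + (1 - q) * Real.exp (a * (0 - q))
      ≤ Real.exp (3 / 4 * a ^ 2) := by
  have ha' := abs_le.1 ha
  have h1 : |a * (1 - q)| ≤ 1 := by
    rw [abs_mul]
    calc |a| * |1 - q| ≤ 1 * 1 := by
          apply mul_le_mul ha _ (abs_nonneg _) zero_le_one
          rw [abs_le]; constructor <;> linarith
      _ = 1 := by norm_num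
  have h2 : |a * (0 - q)| ≤ 1 := by
    rw [abs_mul]
    calc |a| * |0 - q| ≤ 1 * 1 := by
          apply mul_le_mul ha _ (abs_nonneg _) zero_le_one
          rw [abs_le]; constructor <;> linarith
      _ = 1 := by norm_num
  have e1 := exp_quad_bound' h1
  have e2 := exp_quad_bound' h2
  have key : q * Real.exp (a * (1 - q)) + (1 - q) * Real.exp (a * (0 - q))
      ≤ 1 + 3 / 4 * a ^ 2 := by nlinarith [sq_nonneg a, sq_nonneg (1 - q), sq_nonneg q]
  calc _ ≤ 1 + 3/4 * a^2 := key
    _ ≤ Real.exp (3/4 * a^2) := by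
        have := Real.add_one_le_exp (3/4 * a^2); linarith

lemma wbF_mem (w : V → V → ℝ) (hsymm : ∀ x y, w x y = w y x)
    (h0 : ∀ x y, 0 ≤ w x y) (h1 : ∀ x y, w x y ≤ 1) (p : Sym2 V) :
    0 ≤ wbF w hsymm p ∧ wbF w hsymm p ≤ 1 := by
  induction p using Sym2.ind with
  | _ x y => rw [wbF_mk]; exact ⟨h0 x y, h1 x y⟩

lemma expect_exp_le (w : V → V → ℝ) (hsymm : ∀ x y, w x y = w y x)
    (h0 : ∀ x y, 0 ≤ w x y) (h1 : ∀ x y, w x y ≤ 1)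
    (a : Sym2 V → ℝ) (ha : ∀ p, |a p| ≤ 1) :
    ∑ ω : Sym2 V → Bool, muF w hsymm ω
        * Real.exp (∑ p : Sym2 V, a p * (chi (ω p) - wbF w hsymm p))
      ≤ Real.exp (∑ p : Sym2 V, 3 / 4 * (a p) ^ 2) := by
  have hrw : ∀ ω : Sym2 V → Bool,
      Real.exp (∑ p : Sym2 V, a p * (chi (ω p) - wbF w hsymm p))
        = ∏ p : Sym2 V, Real.exp (a p * (chi (ω p) - wbF w hsymm p)) :=
    fun ω => Real.exp_sum _ _
  simp_rw [hrw]
  rw [expect_prod w hsymm (fun p b => Real.exp (a p * (chi b - wbF w hsymm p)))]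
  rw [Real.exp_sum]
  refine Finset.prod_le_prod (fun p _ => ?_) (fun p _ => ?_)
  · have h := wbF_mem w hsymm h0 h1 p
    have := Real.exp_pos (a p * (chi true - wbF w hsymm p))
    have := Real.exp_pos (a p * (chi false - wbF w hsymm p))
    nlinarith [h.1, h.2]
  · have h := wbF_mem w hsymm h0 h1 p
    have hm := coord_mgf h.1 h.2 (ha p)
    simpa [chi] using hm

end Core3

section Core4
variable {V : Type*} [Fintype V] [DecidableEq V]

set_option maxHeartbeats 2000000 in
lemma exists_good_rounding (w : V → V → ℝ) (hsymm : ∀ x y, w x y = w y x)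
    (h0 : ∀ x y, 0 ≤ w x y) (h1 : ∀ x y, w x y ≤ 1)
    (hN : 16 ≤ Fintype.card V) :
    ∃ g : V → V → ℝ, (∀ x y, g x y = g y x) ∧ (∀ x y, g x y = 0 ∨ g x y = 1) ∧
      ∀ U W : Finset V, |weightSum g U W - weightSum w U W|
        ≤ 4 * (Fintype.card V : ℝ) * Real.sqrt (Fintype.card V) := by
  set N := Fintype.card V with hNdef
  set n : ℝ := (N : ℝ) with hndef
  have hn16 : (16 : ℝ) ≤ n := by rw [hndef]; exact_mod_cast hN
  have hn0 : (0 : ℝ) < n := by linarith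
  have hsq : (4 : ℝ) ≤ Real.sqrt n := by
    rw [show (4:ℝ) = Real.sqrt 16 by
      rw [show (16:ℝ) = 4^2 by norm_num, Real.sqrt_sq (by norm_num)]]
    exact Real.sqrt_le_sqrt hn16
  have hsq0 : (0 : ℝ) < Real.sqrt n := by linarith
  set t : ℝ := 4 * n * Real.sqrt n with htdef
  have ht0 : 0 < t := by positivity
  set lam : ℝ := t / (3 * n ^ 2) with hlamdef
  have hlam0 : 0 < lam := by positivity
  have hss : Real.sqrt n * Real.sqrt n = n := Real.mul_self_sqrt (le_of_lt hn0)
  have hlam2 : 2 * lam ≤ 1 := by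
    rw [hlamdef, htdef]
    have h1 : 2 * (4 * n * Real.sqrt n / (3 * n ^ 2)) = 8 * n * Real.sqrt n / (3 * n ^ 2) := by
      ring
    rw [h1, div_le_one (by positivity)]
    nlinarith
  suffices key : ∃ ω : Sym2 V → Bool, ∀ U W : Finset V,
      |weightSum (fun x y => chi (ω s(x, y))) U W - weightSum w U W| ≤ t by
    obtain ⟨ω, hω⟩ := key
    refine ⟨fun x y => chi (ω s(x, y)),
      fun x y => by show chi (ω s(x, y)) = chi (ω s(y, x)); rw [Sym2.eq_swap],
      fun x y => ?_, hω⟩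
    by_cases h : ω s(x, y) <;> simp [chi, h]
  by_contra hcon
  push_neg at hcon
  -- abbreviation for the deviation
  set S : (Sym2 V → Bool) → Finset V → Finset V → ℝ :=
    fun ω U W => weightSum (fun x y => chi (ω s(x, y))) U W - weightSum w U W with hSdef
  -- Step B : Chernoff bound for each box and sign
  have stepB : ∀ (U W : Finset V) (s : ℝ), s = 1 ∨ s = -1 →
      ∑ ω : Sym2 V → Bool, muF w hsymm ω * Real.exp (lam * (s * S ω U W - t))
        ≤ Real.exp (-(8/3) * n) := by
    intro U W s hs
    have habs : |s| = 1 := by rcases hs with h | h <;> simp [h]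
    have hrepr : ∀ ω : Sym2 V → Bool, lam * (s * S ω U W - t)
        = -(lam * t) + ∑ p : Sym2 V,
            (s * lam * (fibc U W p : ℝ)) * (chi (ω p) - wbF w hsymm p) := by
      intro ω
      have hthis := S_repr w hsymm ω U W
      rw [hSdef]
      simp only
      rw [hthis]
      calc lam * (s * (∑ p : Sym2 V, (fibc U W p : ℝ) * (chi (ω p) - wbF w hsymm p)) - t)
          = -(lam * t) + (s * lam) * ∑ p : Sym2 V,
              (fibc U W p : ℝ) * (chi (ω p) - wbF w hsymm p) := by ring
        _ = -(lam * t) + ∑ p : Sym2 V,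
              (s * lam) * ((fibc U W p : ℝ) * (chi (ω p) - wbF w hsymm p)) := by
            rw [Finset.mul_sum]
        _ = -(lam * t) + ∑ p : Sym2 V,
              (s * lam * (fibc U W p : ℝ)) * (chi (ω p) - wbF w hsymm p) := by
            congr 1
            exact Finset.sum_congr rfl fun p _ => by ring
    have ha : ∀ p : Sym2 V, |s * lam * (fibc U W p : ℝ)| ≤ 1 := by
      intro p
      rw [abs_mul, abs_mul, habs, one_mul, abs_of_pos hlam0,
        abs_of_nonneg (by positivity : (0:ℝ) ≤ (fibc U W p : ℝ))]
      have hc : (fibc U W p : ℝ) ≤ 2 := by exact_mod_cast fibc_le_two U W p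
      nlinarith
    calc ∑ ω : Sym2 V → Bool, muF w hsymm ω * Real.exp (lam * (s * S ω U W - t))
        = Real.exp (-(lam * t)) * ∑ ω : Sym2 V → Bool, muF w hsymm ω
            * Real.exp (∑ p : Sym2 V,
                (s * lam * (fibc U W p : ℝ)) * (chi (ω p) - wbF w hsymm p)) := by
          rw [Finset.mul_sum]
          refine Finset.sum_congr rfl fun ω _ => ?_
          rw [hrepr ω, Real.exp_add]; ring
      _ ≤ Real.exp (-(lam * t)) * Real.exp (∑ p : Sym2 V,
            3 / 4 * (s * lam * (fibc U W p : ℝ)) ^ 2) := by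
          refine mul_le_mul_of_nonneg_left ?_ (le_of_lt (Real.exp_pos _))
          exact expect_exp_le w hsymm h0 h1 _ ha
      _ ≤ Real.exp (-(8/3) * n) := by
          rw [← Real.exp_add]
          apply Real.exp_le_exp.2
          have hsum : ∑ p : Sym2 V, 3 / 4 * (s * lam * (fibc U W p : ℝ)) ^ 2
              ≤ 3 / 2 * lam ^ 2 * n ^ 2 := by
            have hstep : ∀ p : Sym2 V, 3 / 4 * (s * lam * (fibc U W p : ℝ)) ^ 2
                ≤ 3 / 2 * lam ^ 2 * (fibc U W p : ℝ) := by
              intro p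
              have hc2 : (fibc U W p : ℝ) ≤ 2 := by exact_mod_cast fibc_le_two U W p
              have hc0 : (0:ℝ) ≤ (fibc U W p : ℝ) := by positivity
              have hs2 : s ^ 2 = 1 := by rcases hs with h | h <;> simp [h]
              have : (s * lam * (fibc U W p : ℝ)) ^ 2
                  = lam ^ 2 * (fibc U W p : ℝ) ^ 2 := by
                rw [mul_pow, mul_pow, hs2]; ring
              rw [this]
              nlinarith [mul_nonneg (sq_nonneg lam)
                (mul_nonneg hc0 (by linarith : (0:ℝ) ≤ 2 - (fibc U W p : ℝ)))]
            calc ∑ p : Sym2 V, 3 / 4 * (s * lam * (fibc U W p : ℝ)) ^ 2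
                ≤ ∑ p : Sym2 V, 3 / 2 * lam ^ 2 * (fibc U W p : ℝ) :=
                  Finset.sum_le_sum fun p _ => hstep p
              _ = 3 / 2 * lam ^ 2 * ((U.card : ℝ) * W.card) := by
                  rw [← Finset.mul_sum]
                  congr 1
                  rw [← Nat.cast_sum, ← Nat.cast_mul, fibc_sum]
              _ ≤ 3 / 2 * lam ^ 2 * n ^ 2 := by
                  have hU : (U.card : ℝ) ≤ n := by
                    rw [hndef]; exact_mod_cast Finset.card_le_univ U
                  have hW : (W.card : ℝ) ≤ n := by
                    rw [hndef]; exact_mod_cast Finset.card_le_univ W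
                  have hU0 : (0:ℝ) ≤ (U.card : ℝ) := by positivity
                  have hW0 : (0:ℝ) ≤ (W.card : ℝ) := by positivity
                  have : (U.card : ℝ) * W.card ≤ n ^ 2 := by nlinarith
                  nlinarith [sq_nonneg lam]
          have heq : -(lam * t) + 3 / 2 * lam ^ 2 * n ^ 2 = -(8/3) * n := by
            rw [hlamdef, htdef]
            field_simp
            ring_nf
            rw [show Real.sqrt n ^ 2 = Real.sqrt n * Real.sqrt n by ring, hss]
          linarith
  -- Step A: pointwise lower bound
  have stepA : ∀ ω : Sym2 V → Bool, (1:ℝ) ≤ ∑ U : Finset V, ∑ W : Finset V,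
      (Real.exp (lam * (S ω U W - t)) + Real.exp (lam * (-S ω U W - t))) := by
    intro ω
    obtain ⟨U, W, hUW⟩ := hcon ω
    have hS' : t < |S ω U W| := hUW
    have hterm : (1:ℝ) ≤ Real.exp (lam * (S ω U W - t))
        + Real.exp (lam * (-S ω U W - t)) := by
      rcases lt_abs.1 hS' with h | h
      · have hx : 0 ≤ lam * (S ω U W - t) := by nlinarith
        have := Real.one_le_exp hx
        linarith [Real.exp_pos (lam * (-S ω U W - t))]
      · have hx : 0 ≤ lam * (-S ω U W - t) := by nlinarith
        have := Real.one_le_exp hx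
        linarith [Real.exp_pos (lam * (S ω U W - t))]
    calc (1:ℝ) ≤ Real.exp (lam * (S ω U W - t)) + Real.exp (lam * (-S ω U W - t)) :=
          hterm
      _ ≤ ∑ W' : Finset V,
            (Real.exp (lam * (S ω U W' - t)) + Real.exp (lam * (-S ω U W' - t))) :=
          by
          refine Finset.single_le_sum (f := fun W' : Finset V =>
            Real.exp (lam * (S ω U W' - t)) + Real.exp (lam * (-S ω U W' - t)))
            (fun i _ => by positivity) (Finset.mem_univ W)
      _ ≤ ∑ U' : Finset V, ∑ W' : Finset V,
            (Real.exp (lam * (S ω U' W' - t)) + Real.exp (lam * (-S ω U' W' - t))) :=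
          by
          refine Finset.single_le_sum (f := fun U' : Finset V => ∑ W' : Finset V,
            (Real.exp (lam * (S ω U' W' - t)) + Real.exp (lam * (-S ω U' W' - t))))
            (fun i _ => Finset.sum_nonneg fun j _ => by positivity) (Finset.mem_univ U)
  -- Step C : combine
  have main : (1:ℝ) ≤ (2:ℝ)^N * ((2:ℝ)^N * (Real.exp (-(8/3) * n)
      + Real.exp (-(8/3) * n))) := by
    calc (1:ℝ) = ∑ ω : Sym2 V → Bool, muF w hsymm ω := (expect_total w hsymm).symm
      _ ≤ ∑ ω : Sym2 V → Bool, muF w hsymm ω * ∑ U : Finset V, ∑ W : Finset V,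
            (Real.exp (lam * (S ω U W - t)) + Real.exp (lam * (-S ω U W - t))) := by
          refine Finset.sum_le_sum fun ω _ => ?_
          exact le_mul_of_one_le_right (muF_nonneg w hsymm h0 h1 ω) (stepA ω)
      _ = ∑ U : Finset V, ∑ W : Finset V,
            ((∑ ω : Sym2 V → Bool, muF w hsymm ω * Real.exp (lam * (S ω U W - t)))
              + ∑ ω : Sym2 V → Bool, muF w hsymm ω
                  * Real.exp (lam * (-S ω U W - t))) := by
          simp_rw [Finset.mul_sum]
          rw [Finset.sum_comm]
          refine Finset.sum_congr rfl fun U _ => ?_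
          rw [Finset.sum_comm]
          refine Finset.sum_congr rfl fun W _ => ?_
          rw [← Finset.sum_add_distrib]
          refine Finset.sum_congr rfl fun ω _ => by ring
      _ ≤ ∑ U : Finset V, ∑ W : Finset V,
            (Real.exp (-(8/3) * n) + Real.exp (-(8/3) * n)) := by
          refine Finset.sum_le_sum fun U _ => Finset.sum_le_sum fun W _ => ?_
          have hA := stepB U W 1 (Or.inl rfl)
          have hB := stepB U W (-1) (Or.inr rfl)
          simp only [one_mul, neg_one_mul] at hA hB
          exact add_le_add hA hB
      _ = (2:ℝ)^N * ((2:ℝ)^N * (Real.exp (-(8/3) * n) + Real.exp (-(8/3) * n))) := by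
          rw [Finset.sum_const, Finset.sum_const]
          simp only [Finset.card_univ, Fintype.card_finset, nsmul_eq_mul]
          push_cast
          rw [hNdef]
  -- numeric contradiction
  have h2e : (2:ℝ) ≤ Real.exp 1 := by
    have := Real.add_one_le_exp (1:ℝ); linarith
  have hpow : (2:ℝ)^(2*N+1) ≤ Real.exp ((2*N+1 : ℕ) : ℝ) := by
    calc (2:ℝ)^(2*N+1) ≤ (Real.exp 1)^(2*N+1) :=
          pow_le_pow_left₀ (by norm_num) h2e _
      _ = Real.exp ((2*N+1 : ℕ) : ℝ) := by
          rw [← Real.exp_nat_mul]; norm_num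
  have hkey : (2:ℝ)^N * ((2:ℝ)^N * (Real.exp (-(8/3) * n) + Real.exp (-(8/3) * n)))
      = (2:ℝ)^(2*N+1) * Real.exp (-(8/3) * n) := by
    rw [pow_succ, two_mul, pow_add]; ring
  have hfin : (2:ℝ)^(2*N+1) * Real.exp (-(8/3) * n) < 1 := by
    calc (2:ℝ)^(2*N+1) * Real.exp (-(8/3) * n)
        ≤ Real.exp ((2*N+1 : ℕ) : ℝ) * Real.exp (-(8/3) * n) :=
          mul_le_mul_of_nonneg_right hpow (le_of_lt (Real.exp_pos _))
      _ = Real.exp (((2*N+1 : ℕ) : ℝ) + (-(8/3) * n)) := (Real.exp_add _ _).symm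
      _ < 1 := by
          rw [show (1:ℝ) = Real.exp 0 from (Real.exp_zero).symm]
          apply Real.exp_lt_exp.2
          have : ((2*N+1 : ℕ) : ℝ) = 2 * n + 1 := by rw [hndef]; push_cast; ring
          rw [this]
          linarith
  rw [hkey] at main
  linarith

end Core4


section Final
variable {V : Type*} [Fintype V] [DecidableEq V]

lemma partition_diff (g w : V → V → ℝ) (P : Finset (Finset V)) (hP : IsPartition P)
    (t : ℝ) (ht : 0 ≤ t)
    (hbox : ∀ U W : Finset V, |weightSum g U W - weightSum w U W| ≤ t) :
    |wIrregPartition g P - wIrregPartition w P| ≤ 2 * (P.card : ℝ) ^ 2 * t := by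
  have hdiff : wIrregPartition g P - wIrregPartition w P
      = ∑ X ∈ P, ∑ Y ∈ P, (wIrregPair g X Y - wIrregPair w X Y) := by
    rw [wIrregPartition, wIrregPartition, ← Finset.sum_sub_distrib]
    exact Finset.sum_congr rfl fun X _ => (Finset.sum_sub_distrib _ _).symm
  rw [hdiff]
  calc |∑ X ∈ P, ∑ Y ∈ P, (wIrregPair g X Y - wIrregPair w X Y)|
      ≤ ∑ X ∈ P, |∑ Y ∈ P, (wIrregPair g X Y - wIrregPair w X Y)| :=
        Finset.abs_sum_le_sum_abs _ _
    _ ≤ ∑ X ∈ P, ∑ Y ∈ P, |wIrregPair g X Y - wIrregPair w X Y| :=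
        Finset.sum_le_sum fun X _ => Finset.abs_sum_le_sum_abs _ _
    _ ≤ ∑ X ∈ P, ∑ Y ∈ P, 2 * t :=
        Finset.sum_le_sum fun X hX => Finset.sum_le_sum fun Y hY =>
          pair_diff g w X Y (hP.1 X hX) (hP.1 Y hY) t hbox
    _ = 2 * (P.card : ℝ) ^ 2 * t := by
        simp only [Finset.sum_const, nsmul_eq_mul]
        ring

end Final

/-- For every weighted graph on `N` vertices with weights in `[0,1]` there is an
unweighted graph on the same vertex set such that the irregularity of every partition
into at most `k` nonempty parts changes by at most `8k²N^(3/2)`. -/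
theorem exists_unweighted_irregularity_approximation {V : Type*} [Fintype V] [DecidableEq V]
    (w : V → V → ℝ) (hsymm : ∀ x y, w x y = w y x) (h0 : ∀ x y, 0 ≤ w x y)
    (h1 : ∀ x y, w x y ≤ 1) :
    ∃ g : V → V → ℝ, (∀ x y, g x y = g y x) ∧ (∀ x y, g x y = 0 ∨ g x y = 1) ∧
      ∀ (k : ℕ), 0 < k → ∀ P : Finset (Finset V), IsPartition P → P.card ≤ k →
        |wIrregPartition g P - wIrregPartition w P| ≤
          8 * (k : ℝ) ^ 2 * (Fintype.card V : ℝ) ^ ((3 : ℝ) / 2) := by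
  by_cases hbig : 16 ≤ Fintype.card V
  · obtain ⟨g, hgs, hg01, hbox⟩ := exists_good_rounding w hsymm h0 h1 hbig
    refine ⟨g, hgs, hg01, ?_⟩
    intro k hk P hP hPk
    set n : ℝ := (Fintype.card V : ℝ) with hndef
    have hn0 : (0:ℝ) < n := by
      rw [hndef]; exact_mod_cast lt_of_lt_of_le (by norm_num) hbig
    have hrpow : n ^ ((3:ℝ)/2) = n * Real.sqrt n := by
      rw [show (3:ℝ)/2 = 1 + 1/2 by norm_num, Real.rpow_add hn0, Real.rpow_one,
        ← Real.sqrt_eq_rpow]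
    have hdiff := partition_diff g w P hP (4 * n * Real.sqrt n) (by positivity) hbox
    refine hdiff.trans ?_
    have hcard : (P.card : ℝ) ≤ (k : ℝ) := by exact_mod_cast hPk
    have hcard0 : (0:ℝ) ≤ (P.card : ℝ) := by positivity
    calc 2 * (P.card : ℝ) ^ 2 * (4 * n * Real.sqrt n)
        ≤ 2 * (k : ℝ) ^ 2 * (4 * n * Real.sqrt n) := by
          have : (P.card : ℝ) ^ 2 ≤ (k : ℝ) ^ 2 := by nlinarith
          have hpos : (0:ℝ) ≤ 4 * n * Real.sqrt n := by positivity
          nlinarith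
      _ = 8 * (k : ℝ) ^ 2 * (n * Real.sqrt n) := by ring
      _ = 8 * (k : ℝ) ^ 2 * n ^ ((3:ℝ)/2) := by rw [hrpow]
  · push_neg at hbig
    refine ⟨fun _ _ => 0, fun _ _ => rfl, fun _ _ => Or.inl rfl, ?_⟩
    intro k hk P hP hPk
    set n : ℝ := (Fintype.card V : ℝ) with hndef
    have hn0 : (0:ℝ) ≤ n := by rw [hndef]; positivity
    have hn16 : n ≤ 16 := by
      rw [hndef]; exact_mod_cast le_of_lt hbig
    have hbox : ∀ U W : Finset V,
        |weightSum (fun _ _ => (0:ℝ)) U W - weightSum w U W| ≤ n ^ 2 := by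
      intro U W
      have hz : weightSum (fun _ _ => (0:ℝ)) U W = 0 := by simp [weightSum]
      rw [hz, zero_sub, abs_neg]
      have hw0 : 0 ≤ weightSum w U W :=
        Finset.sum_nonneg fun x _ => Finset.sum_nonneg fun y _ => h0 x y
      rw [abs_of_nonneg hw0]
      have hU : (U.card : ℝ) ≤ n := by rw [hndef]; exact_mod_cast Finset.card_le_univ U
      have hW : (W.card : ℝ) ≤ n := by rw [hndef]; exact_mod_cast Finset.card_le_univ W
      have hsum : weightSum w U W ≤ (U.card : ℝ) * W.card := by
        calc weightSum w U W ≤ ∑ x ∈ U, ∑ y ∈ W, (1:ℝ) :=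
              Finset.sum_le_sum fun x _ => Finset.sum_le_sum fun y _ => h1 x y
          _ = (U.card : ℝ) * W.card := by
              simp [Finset.sum_const, nsmul_eq_mul]
      have hU0 : (0:ℝ) ≤ (U.card : ℝ) := by positivity
      nlinarith
    have hdiff := partition_diff (fun _ _ => (0:ℝ)) w P hP (n ^ 2) (by positivity) hbox
    refine hdiff.trans ?_
    have hcard : (P.card : ℝ) ≤ (k : ℝ) := by exact_mod_cast hPk
    have hcard0 : (0:ℝ) ≤ (P.card : ℝ) := by positivity
    rcases eq_or_lt_of_le hn0 with hzero | hpos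
    · rw [← hzero, Real.zero_rpow (by norm_num : (3:ℝ)/2 ≠ 0)]
      norm_num
    · have hrpow : n ^ ((3:ℝ)/2) = n * Real.sqrt n := by
        rw [show (3:ℝ)/2 = 1 + 1/2 by norm_num, Real.rpow_add hpos, Real.rpow_one,
          ← Real.sqrt_eq_rpow]
      have hss : Real.sqrt n * Real.sqrt n = n := Real.mul_self_sqrt hn0
      have hsq4 : Real.sqrt n ≤ 4 := by
        rw [show (4:ℝ) = Real.sqrt 16 by
          rw [show (16:ℝ) = 4 ^ 2 by norm_num, Real.sqrt_sq (by norm_num)]]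
        exact Real.sqrt_le_sqrt hn16
      have hn2 : n ^ 2 ≤ 4 * (n * Real.sqrt n) := by
        nlinarith [Real.sqrt_nonneg n, mul_nonneg hn0 (Real.sqrt_nonneg n)]
      calc 2 * (P.card : ℝ) ^ 2 * n ^ 2 ≤ 2 * (k : ℝ) ^ 2 * n ^ 2 := by
            have : (P.card : ℝ) ^ 2 ≤ (k : ℝ) ^ 2 := by nlinarith
            nlinarith [sq_nonneg n]
        _ ≤ 2 * (k : ℝ) ^ 2 * (4 * (n * Real.sqrt n)) := by
            have hk0 : (0:ℝ) ≤ 2 * (k : ℝ) ^ 2 := by positivity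
            nlinarith
        _ = 8 * (k : ℝ) ^ 2 * (n * Real.sqrt n) := by ring
        _ = 8 * (k : ℝ) ^ 2 * n ^ ((3:ℝ)/2) := by rw [hrpow]
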